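/- Let F be a polynomial over a commutative ring and p a positive integer. If p is a good difference-prime for supp(F) (no two distinct exponents of F are congruent modulo p), then F mod (x^p − 1) has exactly as many nonzero terms as F, and its coefficients are a permutation of the coefficients of F. -/
import Mathlib


open Polynomial

theorem reduce_mod_xp_good_prime {R : Type*} [CommRing R] (F : Polynomial R) (p : ℕ)
    (hp : 0 < p)
    (hgood : ∀ e ∈ F.support, ∀ e' ∈ F.support, e % p = e' % p → e = e') :
    let Fmod := ∑ e ∈ F.support, Polynomial.C (F.coeff e) * Polynomial.X ^ (e % p)
    Fmod.support = F.support.image (· % p) ∧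
    Fmod.support.card = F.support.card ∧
    ∀ e ∈ F.support, Fmod.coeff (e % p) = F.coeff e := by
  intro Fmod
  have hcoeff : ∀ k : ℕ, Fmod.coeff k = ∑ e ∈ F.support, if e % p = k then F.coeff e else 0 := by
    intro k
    simp only [Fmod, Polynomial.finset_sum_coeff, Polynomial.coeff_C_mul,
      Polynomial.coeff_X_pow, mul_ite, mul_one, mul_zero]
    exact Finset.sum_congr rfl fun e _ => by simp [eq_comm]
  have hc : ∀ e ∈ F.support, Fmod.coeff (e % p) = F.coeff e := by
    intro e he
    rw [hcoeff]
    rw [Finset.sum_eq_single e]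
    · simp
    · intro e' he' hne
      have : ¬ (e' % p = e % p) := fun h => hne (hgood e' he' e he h)
      simp [this]
    · intro h; exact absurd he h
  have hsupp : Fmod.support = F.support.image (· % p) := by
    ext k
    rw [Polynomial.mem_support_iff]
    simp only [Finset.mem_image]
    constructor
    · intro hk
      by_contra hnone
      push_neg at hnone
      apply hk
      rw [hcoeff]
      apply Finset.sum_eq_zero
      intro e he
      have : ¬ e % p = k := fun h => (hnone e he) h
      simp [this]
    · rintro ⟨e, he, rfl⟩
      rw [hc e he]
      exact Polynomial.mem_support_iff.mp he
  refine ⟨hsupp, ?_, hc⟩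
  rw [hsupp, Finset.card_image_of_injOn]
  exact fun e he e' he' h => hgood e he e' he' h
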